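/- arXiv:2005.07587 — 2 statements merged into one kernel-verified Lean document; each statement's English description precedes it below -/
import Mathlib

section
/- For unit vectors v and v' in R^p and a constant k > -1, the trace of (I + k v' v'^T)^{-1} (I + k v v^T) equals p + (k^2/(k+1)) * (1 - <v, v'>^2). -/
open Matrix
/-- Euclidean norm of a vector in `Fin p → ℝ`. -/
noncomputable def enorm' {p : ℕ} (v : Fin p → ℝ) : ℝ := Real.sqrt (v ⬝ᵥ v)

lemma vecMulVec_mul_vecMulVec' {p : ℕ} (a b c d : Fin p → ℝ) :
    Matrix.vecMulVec a b * Matrix.vecMulVec c d = (b ⬝ᵥ c) • Matrix.vecMulVec a d := by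
  ext i j
  simp only [Matrix.mul_apply, Matrix.vecMulVec_apply, Matrix.smul_apply, dotProduct,
    Finset.sum_mul, smul_eq_mul]
  exact Finset.sum_congr rfl fun x _ => by ring

lemma trace_vecMulVec' {p : ℕ} (a b : Fin p → ℝ) :
    Matrix.trace (Matrix.vecMulVec a b) = a ⬝ᵥ b := by
  simp [Matrix.trace, Matrix.diag, Matrix.vecMulVec_apply, dotProduct]

lemma enorm_dot {p : ℕ} (v : Fin p → ℝ) (hv : enorm' v = 1) : v ⬝ᵥ v = 1 := by
  have h0 : 0 ≤ v ⬝ᵥ v := by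
    simpa [dotProduct] using Finset.sum_nonneg fun i _ => mul_self_nonneg (v i)
  have := congrArg (· ^ 2) hv
  simpa [enorm', Real.sq_sqrt h0] using this

/-- Trace of `(I + k v' v'ᵀ)⁻¹ (I + k v vᵀ)` for unit vectors `v, v'` and `k > -1`. -/
theorem trace_inv_spike_mul_spike {p : ℕ} (v v' : Fin p → ℝ)
    (hv : enorm' v = 1) (hv' : enorm' v' = 1) (k : ℝ) (hk : -1 < k) :
    Matrix.trace ((1 + k • Matrix.vecMulVec v' v')⁻¹ * (1 + k • Matrix.vecMulVec v v)) =
      (p : ℝ) + k ^ 2 / (k + 1) * (1 - (v ⬝ᵥ v') ^ 2) := by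
  have hk1 : k + 1 ≠ 0 := by linarith
  have hdv : v ⬝ᵥ v = 1 := enorm_dot v hv
  have hdv' : v' ⬝ᵥ v' = 1 := enorm_dot v' hv'
  set A := 1 + k • Matrix.vecMulVec v' v' with hA
  set B := 1 - (k / (k + 1)) • Matrix.vecMulVec v' v' with hB
  have hBA : B * A = 1 := by
    rw [hA, hB]
    rw [sub_mul, one_mul, mul_add, mul_one, Matrix.smul_mul, Matrix.mul_smul,
      vecMulVec_mul_vecMulVec', hdv', one_smul, smul_smul]
    have h1 : (1:ℝ) + k ≠ 0 := by linarith
    match_scalars <;> field_simp <;> ring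
  have hinv : A⁻¹ = B := Matrix.inv_eq_left_inv hBA
  rw [hinv, hB]
  rw [sub_mul, one_mul, mul_add, mul_one, Matrix.smul_mul, Matrix.mul_smul,
    vecMulVec_mul_vecMulVec', smul_smul]
  simp only [Matrix.trace_sub, Matrix.trace_add, Matrix.trace_smul, Matrix.trace_one, Fintype.card_fin,
    trace_vecMulVec', smul_eq_mul]
  have hsym : v' ⬝ᵥ v = v ⬝ᵥ v' := dotProduct_comm _ _
  rw [hsym, hdv', hdv]
  field_simp
  ring
end

section
/- Let K ⊂ R^p be a convex cone, E a p×p real matrix, and x̄ ∈ K with ‖x̄‖ = 1. For any v ∈ K with ‖v‖ = 1, |v^T E v - x̄^T E x̄| ≤ 4 ‖v + x̄‖ ‖E‖_K, where ‖E‖_K = sup_{x,y ∈ K, ‖x‖=‖y‖=1} |x^T E y|. -/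
open Matrix

/-- Euclidean norm of a vector in `Fin p → ℝ`. -/
noncomputable def eucNorm {p : ℕ} (v : Fin p → ℝ) : ℝ := Real.sqrt (v ⬝ᵥ v)

/-- The cone-restricted operator seminorm
`‖E‖_C = sup_{x,y ∈ C, ‖x‖=‖y‖=1} |xᵀ E y|`. -/
noncomputable def coneNorm {p : ℕ} (C : Set (Fin p → ℝ)) (E : Matrix (Fin p) (Fin p) ℝ) : ℝ :=
  sSup {r : ℝ | ∃ x ∈ C, ∃ y ∈ C, eucNorm x = 1 ∧ eucNorm y = 1 ∧ r = |x ⬝ᵥ E.mulVec y|}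

lemma dot_self_nonneg' {p : ℕ} (v : Fin p → ℝ) : 0 ≤ v ⬝ᵥ v :=
  Finset.sum_nonneg fun i _ => mul_self_nonneg _

lemma eucNorm_nonneg' {p : ℕ} (v : Fin p → ℝ) : 0 ≤ eucNorm v := Real.sqrt_nonneg _

lemma eucNorm_smul' {p : ℕ} {c : ℝ} (hc : 0 ≤ c) (v : Fin p → ℝ) :
    eucNorm (c • v) = c * eucNorm v := by
  unfold eucNorm
  rw [smul_dotProduct, dotProduct_smul, smul_eq_mul, smul_eq_mul, ← mul_assoc,
    Real.sqrt_mul (mul_self_nonneg c), Real.sqrt_mul_self hc]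

lemma eucNorm_eq_norm' {p : ℕ} (v : Fin p → ℝ) :
    eucNorm v = ‖(WithLp.equiv 2 (Fin p → ℝ)).symm v‖ := by
  rw [EuclideanSpace.norm_eq]
  unfold eucNorm
  congr 1
  simp [dotProduct, Real.norm_eq_abs, sq_abs, sq]

lemma eucNorm_add_le' {p : ℕ} (a b : Fin p → ℝ) : eucNorm (a + b) ≤ eucNorm a + eucNorm b := by
  simp only [eucNorm_eq_norm']
  have : (WithLp.equiv 2 (Fin p → ℝ)).symm (a + b)
      = (WithLp.equiv 2 (Fin p → ℝ)).symm a + (WithLp.equiv 2 (Fin p → ℝ)).symm b := rfl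
  rw [this]
  exact norm_add_le _ _

lemma eucNorm_eq_zero' {p : ℕ} {v : Fin p → ℝ} (h : eucNorm v = 0) : v = 0 := by
  have : v ⬝ᵥ v = 0 := by
    have := Real.sqrt_eq_zero (dot_self_nonneg' v) |>.mp h
    exact this
  exact (dotProduct_self_eq_zero).mp this

lemma abs_entry_le_one {p : ℕ} {x : Fin p → ℝ} (hx : eucNorm x = 1) (i : Fin p) : |x i| ≤ 1 := by
  have hd : x ⬝ᵥ x = 1 := by
    have := congrArg (· ^ 2) hx
    simpa [eucNorm, Real.sq_sqrt (dot_self_nonneg' x)] using this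
  have h1 : x i * x i ≤ x ⬝ᵥ x := by
    unfold dotProduct
    exact Finset.single_le_sum (fun j _ => mul_self_nonneg (x j)) (Finset.mem_univ i)
  rw [hd] at h1
  exact abs_le_one_iff_mul_self_le_one.mpr h1

theorem dot_le_coneNorm {p : ℕ} (K : ConvexCone ℝ (Fin p → ℝ))
    (E : Matrix (Fin p) (Fin p) ℝ) {u : Fin p → ℝ} (huK : u ∈ K) (hu : eucNorm u = 1)
    (a b : Fin p → ℝ) (haK : a ∈ K) (hbK : b ∈ K) :
    |a ⬝ᵥ E.mulVec b| ≤ eucNorm a * eucNorm b * coneNorm (K : Set (Fin p → ℝ)) E := by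
  set S := {r : ℝ | ∃ x ∈ (K : Set (Fin p → ℝ)), ∃ y ∈ (K : Set (Fin p → ℝ)),
    eucNorm x = 1 ∧ eucNorm y = 1 ∧ r = |x ⬝ᵥ E.mulVec y|} with hS
  have hbdd : BddAbove S := by
    refine ⟨∑ i, ∑ j, |E i j|, ?_⟩
    rintro r ⟨x, hxK, y, hyK, hx1, hy1, rfl⟩
    calc |x ⬝ᵥ E.mulVec y| ≤ ∑ i, |x i * (E.mulVec y) i| := by
          exact Finset.abs_sum_le_sum_abs _ _
      _ ≤ ∑ i, ∑ j, |E i j| := by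
          apply Finset.sum_le_sum
          intro i _
          rw [abs_mul]
          calc |x i| * |(E.mulVec y) i| ≤ 1 * |(E.mulVec y) i| :=
                mul_le_mul_of_nonneg_right (abs_entry_le_one hx1 i) (abs_nonneg _)
            _ = |∑ j, E i j * y j| := by rw [one_mul]; rfl
            _ ≤ ∑ j, |E i j * y j| := Finset.abs_sum_le_sum_abs _ _
            _ ≤ ∑ j, |E i j| := by
                apply Finset.sum_le_sum
                intro j _
                rw [abs_mul]
                calc |E i j| * |y j| ≤ |E i j| * 1 :=
                      mul_le_mul_of_nonneg_left (abs_entry_le_one hy1 j) (abs_nonneg _)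
                  _ = |E i j| := mul_one _
  have hmem : ∀ {x y : Fin p → ℝ}, x ∈ K → y ∈ K → eucNorm x = 1 → eucNorm y = 1 →
      |x ⬝ᵥ E.mulVec y| ≤ coneNorm (K : Set (Fin p → ℝ)) E := by
    intro x y hxK hyK hx1 hy1
    exact le_csSup hbdd ⟨x, hxK, y, hyK, hx1, hy1, rfl⟩
  have hN0 : 0 ≤ coneNorm (K : Set (Fin p → ℝ)) E :=
    le_trans (abs_nonneg _) (hmem huK huK hu hu)
  by_cases ha : eucNorm a = 0
  · rw [eucNorm_eq_zero' ha]
    simpa using mul_nonneg (mul_nonneg (eucNorm_nonneg' (0 : Fin p → ℝ)) (eucNorm_nonneg' b)) hN0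
  by_cases hb : eucNorm b = 0
  · rw [eucNorm_eq_zero' hb]
    simpa using mul_nonneg (mul_nonneg (eucNorm_nonneg' a) (eucNorm_nonneg' (0 : Fin p → ℝ))) hN0
  have hap : 0 < eucNorm a := lt_of_le_of_ne (eucNorm_nonneg' a) (Ne.symm ha)
  have hbp : 0 < eucNorm b := lt_of_le_of_ne (eucNorm_nonneg' b) (Ne.symm hb)
  set a' := (eucNorm a)⁻¹ • a with ha'
  set b' := (eucNorm b)⁻¹ • b with hb'
  have ha'K : a' ∈ K := K.smul_mem (inv_pos.mpr hap) haK
  have hb'K : b' ∈ K := K.smul_mem (inv_pos.mpr hbp) hbK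
  have ha'1 : eucNorm a' = 1 := by
    rw [ha', eucNorm_smul' (le_of_lt (inv_pos.mpr hap))]
    field_simp
  have hb'1 : eucNorm b' = 1 := by
    rw [hb', eucNorm_smul' (le_of_lt (inv_pos.mpr hbp))]
    field_simp
  have key := hmem ha'K hb'K ha'1 hb'1
  have heq : a' ⬝ᵥ E.mulVec b' = (eucNorm a)⁻¹ * ((eucNorm b)⁻¹ * (a ⬝ᵥ E.mulVec b)) := by
    rw [ha', hb', Matrix.mulVec_smul, smul_dotProduct, dotProduct_smul]
    simp [smul_eq_mul]
  rw [heq, abs_mul, abs_mul, abs_of_pos (inv_pos.mpr hap), abs_of_pos (inv_pos.mpr hbp)] at key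
  calc |a ⬝ᵥ E.mulVec b|
      = eucNorm a * eucNorm b * ((eucNorm a)⁻¹ * ((eucNorm b)⁻¹ * |a ⬝ᵥ E.mulVec b|)) := by
        field_simp
    _ ≤ eucNorm a * eucNorm b * coneNorm (K : Set (Fin p → ℝ)) E := by
        exact mul_le_mul_of_nonneg_left key (mul_nonneg hap.le hbp.le)

/-- For unit vectors `v, x̄` in a convex cone `K`,
`|vᵀ E v - x̄ᵀ E x̄| ≤ 4 ‖v + x̄‖ ‖E‖_K`. -/
theorem abs_quadForm_sub_le_add {p : ℕ} (K : ConvexCone ℝ (Fin p → ℝ))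
    (E : Matrix (Fin p) (Fin p) ℝ) (xbar v : Fin p → ℝ)
    (hxK : xbar ∈ K) (hx : eucNorm xbar = 1) (hvK : v ∈ K) (hv : eucNorm v = 1) :
    |v ⬝ᵥ E.mulVec v - xbar ⬝ᵥ E.mulVec xbar| ≤
      4 * eucNorm (v + xbar) * coneNorm (K : Set (Fin p → ℝ)) E := by
  set w := v + xbar with hw
  have hwK : w ∈ K := K.add_mem hvK hxK
  set N := coneNorm (K : Set (Fin p → ℝ)) E with hN
  have hN0 : 0 ≤ N :=
    le_trans (abs_nonneg _) (le_trans (le_refl _)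
      (by
        have := dot_le_coneNorm K E hvK hv v v hvK hvK
        simpa [hv] using this))
  set s := eucNorm w with hs
  have hs0 : 0 ≤ s := eucNorm_nonneg' w
  have hs2 : s ≤ 2 := by
    have := eucNorm_add_le' v xbar
    rw [hv, hx] at this
    rw [hs, hw]
    linarith
  have hid : v ⬝ᵥ E.mulVec v - xbar ⬝ᵥ E.mulVec xbar
      = w ⬝ᵥ E.mulVec w - w ⬝ᵥ E.mulVec xbar - xbar ⬝ᵥ E.mulVec w := by
    rw [hw]
    simp only [Matrix.mulVec_add, add_dotProduct, dotProduct_add]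
    ring
  have h1 : |w ⬝ᵥ E.mulVec w| ≤ s * s * N := by
    simpa [hs] using dot_le_coneNorm K E hvK hv w w hwK hwK
  have h2 : |w ⬝ᵥ E.mulVec xbar| ≤ s * N := by
    have := dot_le_coneNorm K E hvK hv w xbar hwK hxK
    simpa [hs, hx] using this
  have h3 : |xbar ⬝ᵥ E.mulVec w| ≤ s * N := by
    have := dot_le_coneNorm K E hvK hv xbar w hxK hwK
    simpa [hs, hx, mul_comm] using this
  calc |v ⬝ᵥ E.mulVec v - xbar ⬝ᵥ E.mulVec xbar|
      ≤ |w ⬝ᵥ E.mulVec w| + |w ⬝ᵥ E.mulVec xbar| + |xbar ⬝ᵥ E.mulVec w| := by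
        rw [hid]
        calc |w ⬝ᵥ E.mulVec w - w ⬝ᵥ E.mulVec xbar - xbar ⬝ᵥ E.mulVec w|
            ≤ |w ⬝ᵥ E.mulVec w - w ⬝ᵥ E.mulVec xbar| + |xbar ⬝ᵥ E.mulVec w| :=
              abs_sub _ _
          _ ≤ |w ⬝ᵥ E.mulVec w| + |w ⬝ᵥ E.mulVec xbar| + |xbar ⬝ᵥ E.mulVec w| := by
              exact add_le_add_left (abs_sub _ _) _
    _ ≤ s * s * N + s * N + s * N := by
        exact add_le_add (add_le_add h1 h2) h3
    _ ≤ 2 * s * N + s * N + s * N := by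
        have : s * s ≤ 2 * s := mul_le_mul_of_nonneg_right hs2 hs0
        exact add_le_add_left (add_le_add_left
          (mul_le_mul_of_nonneg_right this hN0) _) _
    _ = 4 * s * N := by ring
end
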